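/- Let X be a topological space and let r, r' : X → X be continuous idempotent maps (r ∘ r = r, r' ∘ r' = r') which commute: r ∘ r' = r' ∘ r. Let R = r(X) and R' = r'(X). Suppose α ∈ H_k(R; ℤ) and α' ∈ H_k(R'; ℤ) are homology classes whose images in H_k(X; ℤ) under the inclusion-induced maps are equal. Then there exists β ∈ H_k(R ∩ R'; ℤ) whose image in H_k(X; ℤ) under the inclusion-induced map equals this common image. -/

import Mathlib

open CategoryTheory

/-- The singular chain complex of a topological space: the alternating face map complex
of the levelwise free `ℤ`-module on the singular simplicial set. -/
noncomputable def singularChainComplexFunctor :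
    TopCat.{0} ⥤ ChainComplex (ModuleCat.{0} ℤ) ℕ :=
  TopCat.toSSet ⋙
    ((CategoryTheory.SimplicialObject.whiskering _ _).obj (ModuleCat.free ℤ)) ⋙
    AlgebraicTopology.alternatingFaceMapComplex (ModuleCat.{0} ℤ)

/-- Singular homology `H_k(−; ℤ)` with integer coefficients, as a functor
`TopCat ⥤ ModuleCat ℤ`. -/
noncomputable def singularHomologyFunctor (k : ℕ) : TopCat.{0} ⥤ ModuleCat.{0} ℤ :=
  singularChainComplexFunctor ⋙ HomologicalComplex.homologyFunctor _ _ k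

/-- The map `H_k(S; ℤ) → H_k(X; ℤ)` induced by the inclusion of a subspace `S ⊆ X`
(with its subspace topology). -/
noncomputable def inclusionInducedMap (k : ℕ) {X : Type} [TopologicalSpace X]
    (S : Set X) :
    (singularHomologyFunctor k).obj (TopCat.of S) ⟶
      (singularHomologyFunctor k).obj (TopCat.of X) :=
  (singularHomologyFunctor k).map (TopCat.ofHom ⟨Subtype.val, continuous_subtype_val⟩)

/-- Let `r, r' : X → X` be commuting continuous idempotents with images
`R = r(X)` and `R' = r'(X)`.  If classes `α ∈ H_k(R; ℤ)` and `α' ∈ H_k(R'; ℤ)` have the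
same image in `H_k(X; ℤ)` under the inclusion-induced maps, then some class
`β ∈ H_k(R ∩ R'; ℤ)` maps to this common image. -/
theorem homologous_classes_live_in_intersection {X : Type} [TopologicalSpace X]
    (r r' : X → X) (hrc : Continuous r) (hr'c : Continuous r')
    (hr : r ∘ r = r) (hr' : r' ∘ r' = r') (hcomm : r ∘ r' = r' ∘ r) (k : ℕ)
    (α : (singularHomologyFunctor k).obj (TopCat.of (Set.range r)))
    (α' : (singularHomologyFunctor k).obj (TopCat.of (Set.range r')))
    (heq : inclusionInducedMap k (Set.range r) α
      = inclusionInducedMap k (Set.range r') α') :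
    ∃ β : (singularHomologyFunctor k).obj
        (TopCat.of ((Set.range r ∩ Set.range r' : Set X))),
      inclusionInducedMap k (Set.range r ∩ Set.range r') β
        = inclusionInducedMap k (Set.range r) α := by
  classical
  have hmem : ∀ x : (Set.range r : Set X),
      r' x.val ∈ (Set.range r ∩ Set.range r' : Set X) := by
    rintro ⟨x, y, rfl⟩
    exact ⟨⟨r' y, congrFun hcomm y⟩, ⟨r y, rfl⟩⟩
  let g : TopCat.of (Set.range r) ⟶ TopCat.of ((Set.range r ∩ Set.range r' : Set X)) :=
    TopCat.ofHom ⟨fun x => ⟨r' x.val, hmem x⟩, Continuous.subtype_mk (hr'c.comp continuous_subtype_val) _⟩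
  let f : TopCat.of X ⟶ TopCat.of X := TopCat.ofHom ⟨r', hr'c⟩
  refine ⟨(singularHomologyFunctor k).map g α, ?_⟩
  have h1 : g ≫ (TopCat.ofHom ⟨Subtype.val, continuous_subtype_val⟩ :
      TopCat.of ((Set.range r ∩ Set.range r' : Set X)) ⟶ TopCat.of X)
      = (TopCat.ofHom ⟨Subtype.val, continuous_subtype_val⟩ :
        TopCat.of (Set.range r : Set X) ⟶ TopCat.of X) ≫ f := rfl
  have h2 : (TopCat.ofHom ⟨Subtype.val, continuous_subtype_val⟩ :
      TopCat.of (Set.range r' : Set X) ⟶ TopCat.of X) ≫ f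
      = TopCat.ofHom ⟨Subtype.val, continuous_subtype_val⟩ := by
    ext ⟨x, y, rfl⟩
    exact congrFun hr' y
  show ((singularHomologyFunctor k).map g ≫ inclusionInducedMap k _) α = _
  rw [inclusionInducedMap, ← Functor.map_comp, h1, Functor.map_comp]
  show (singularHomologyFunctor k).map f (inclusionInducedMap k _ α) = _
  rw [heq]
  show (inclusionInducedMap k _ ≫ (singularHomologyFunctor k).map f) α' = _
  rw [inclusionInducedMap, ← Functor.map_comp, h2, ← inclusionInducedMap, ← heq]
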